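/- Let X be a real Banach space, F a norming subspace of X*, and σ the σ(X,F) topology. If K ⊆ X is a nonempty σ-closed, norm-bounded, convex set, then K = ∩_{λ>0} K_λ, where K_λ denotes the σ-closure of K + λB(X) and B(X) is the closed unit ball of X. -/

import Mathlib

open Metric Set Pointwise

/-- The `σ(X,F)` topology on `X`: the topology induced by the functionals in `F`. -/
def sigmaTop {X : Type*} [NormedAddCommGroup X] [NormedSpace ℝ X]
    (F : Submodule ℝ (X →L[ℝ] ℝ)) : TopologicalSpace X :=
  TopologicalSpace.induced (fun x => fun f : F => (f : X →L[ℝ] ℝ) x) inferInstance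

/-- `F` is a norming subspace of `X*`: `‖x‖ = sup {|f x| : f ∈ F, ‖f‖ ≤ 1}`. -/
def IsNorming {X : Type*} [NormedAddCommGroup X] [NormedSpace ℝ X]
    (F : Submodule ℝ (X →L[ℝ] ℝ)) : Prop :=
  ∀ x : X, ‖x‖ = sSup {r : ℝ | ∃ f ∈ F, ‖f‖ ≤ 1 ∧ r = |f x|}

/-- A nonempty σ-closed bounded convex set `K` satisfies `K = ⋂_{λ>0} K_λ`, where `K_λ` is
the σ-closure of `K + λ B(X)`. -/
theorem stmt_16 {X : Type*} [NormedAddCommGroup X] [NormedSpace ℝ X] [CompleteSpace X]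
    (F : Submodule ℝ (X →L[ℝ] ℝ)) (hF : IsNorming F)
    (K : Set X) (hne : K.Nonempty) (hKc : @IsClosed X (sigmaTop F) K)
    (hKb : Bornology.IsBounded K) (hKconv : Convex ℝ K) :
    K = ⋂ l ∈ Set.Ioi (0 : ℝ), @closure X (sigmaTop F) (K + closedBall (0 : X) l) := by
  classical
  set φ : X → (F → ℝ) := fun x => fun f : F => (f : X →L[ℝ] ℝ) x with hφ
  apply Set.Subset.antisymm
  · intro k hk
    refine Set.mem_iInter₂.2 fun l hl => ?_
    have hmem : k ∈ K + closedBall (0 : X) l :=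
      ⟨k, hk, 0, mem_closedBall_self (le_of_lt hl), add_zero k⟩
    exact @subset_closure X (sigmaTop F) _ k hmem
  · intro x hx
    rw [Set.mem_iInter₂] at hx
    refine @IsClosed.closure_subset X (sigmaTop F) K hKc x ((@mem_closure_iff X (sigmaTop F) x K).2 ?_)
    intro U hU hxU
    obtain ⟨V, hV, rfl⟩ := (@isOpen_induced_iff X (F → ℝ) _ U φ).1 hU
    obtain ⟨I, u, hu, hsub⟩ := isOpen_pi_iff.1 hV (φ x) hxU
    have hball : ∀ f : F, ∃ e : ℝ, 0 < e ∧ (f ∈ I → ball (φ x f) e ⊆ u f) := by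
      intro f
      by_cases hf : f ∈ I
      · obtain ⟨e, he, hes⟩ := Metric.isOpen_iff.1 (hu f hf).1 _ (hu f hf).2
        exact ⟨e, he, fun _ => hes⟩
      · exact ⟨1, one_pos, fun h => absurd h hf⟩
    choose ε hεpos hεsub using hball
    rcases I.eq_empty_or_nonempty with hIe | hIne
    · obtain ⟨k₀, hk₀⟩ := hne
      exact ⟨k₀, hsub (by simp [hIe]), hk₀⟩
    · set δ : ℝ := I.inf' hIne (fun f => ε f / (2 * (‖(f : X →L[ℝ] ℝ)‖ + 1))) with hδ
      have hδpos : 0 < δ := by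
        rw [hδ, Finset.lt_inf'_iff]
        intro f _
        have h1 : (0:ℝ) < ε f := hεpos f
        positivity
      have hxδ := hx δ (Set.mem_Ioi.2 hδpos)
      -- a σ-open neighborhood of x with radii ε f / 2
      set W : Set X := φ ⁻¹' ((↑I : Set F).pi fun f => ball (φ x f) (ε f / 2)) with hW
      have hWopen : @IsOpen X (sigmaTop F) W :=
        (@isOpen_induced_iff X (F → ℝ) _ W φ).2
          ⟨_, isOpen_set_pi I.finite_toSet fun f _ => isOpen_ball, rfl⟩
      have hxW : x ∈ W := by
        intro f _
        exact mem_ball_self (by have := hεpos f; positivity)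
      obtain ⟨y, hyW, hyKB⟩ := (@mem_closure_iff X (sigmaTop F) x _).1 hxδ W hWopen hxW
      obtain ⟨k, hk, b, hb, rfl⟩ := hyKB
      refine ⟨k, hsub ?_, hk⟩
      intro f hfI
      have hfI' : f ∈ I := hfI
      apply hεsub f hfI'
      have hδle : δ ≤ ε f / (2 * (‖(f : X →L[ℝ] ℝ)‖ + 1)) := Finset.inf'_le _ hfI'
      have hb' : ‖b‖ ≤ δ := by rwa [mem_closedBall, dist_zero_right] at hb
      have hfb : |(f : X →L[ℝ] ℝ) b| ≤ ‖(f : X →L[ℝ] ℝ)‖ * δ :=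
        le_trans ((f : X →L[ℝ] ℝ).le_opNorm b)
          (mul_le_mul_of_nonneg_left hb' (norm_nonneg _))
      have hy : |(f : X →L[ℝ] ℝ) (k + b) - (f : X →L[ℝ] ℝ) x| < ε f / 2 := by
        have h := hyW f hfI
        rwa [mem_ball, Real.dist_eq] at h
      have hfnn : (0:ℝ) ≤ ‖(f : X →L[ℝ] ℝ)‖ := norm_nonneg _
      have hεf : (0:ℝ) < ε f := hεpos f
      have hδle' : δ * (2 * (‖(f : X →L[ℝ] ℝ)‖ + 1)) ≤ ε f := by
        rw [← le_div_iff₀ (by positivity)]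
        exact hδle
      have hmain : |(f : X →L[ℝ] ℝ) k - (f : X →L[ℝ] ℝ) x| < ε f := by
        have hsum : (f : X →L[ℝ] ℝ) (k + b) = (f : X →L[ℝ] ℝ) k + (f : X →L[ℝ] ℝ) b :=
          map_add _ _ _
        have habs : |(f : X →L[ℝ] ℝ) k - (f : X →L[ℝ] ℝ) x|
            ≤ |(f : X →L[ℝ] ℝ) (k + b) - (f : X →L[ℝ] ℝ) x| + |(f : X →L[ℝ] ℝ) b| := by
          rw [hsum]
          calc |(f : X →L[ℝ] ℝ) k - (f : X →L[ℝ] ℝ) x|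
              = |((f : X →L[ℝ] ℝ) k + (f : X →L[ℝ] ℝ) b - (f : X →L[ℝ] ℝ) x)
                  + (-(f : X →L[ℝ] ℝ) b)| := by ring_nf
          _ ≤ |(f : X →L[ℝ] ℝ) k + (f : X →L[ℝ] ℝ) b - (f : X →L[ℝ] ℝ) x|
                + |(-(f : X →L[ℝ] ℝ) b)| := abs_add_le _ _
          _ = _ := by rw [abs_neg]
        nlinarith [hδpos, hfb, hy]
      rw [mem_ball, Real.dist_eq]
      exact hmain
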